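/- arXiv:2001.10875 — 8 statements merged into one kernel-verified Lean document; each statement's English description precedes it below -/
import Mathlib

section
/- Let I be an SMI instance in which every stable matching matches every man and every woman, and let M_0 be a man-optimal and woman-pessimal stable matching of I. If d_U(M_0) ≥ d_W(M_0), then M_0 is a regret-equal stable matching, i.e., r(M_0) ≤ r(M) for every stable matching M of I. -/
/-- An instance of the Stable Marriage problem with Incomplete lists (SMI):
men `U` and women `W`, each agent ranking a subset of the other side
in strict order of preference (represented as a duplicate-free list,
most-preferred first). -/
structure SMI (U W : Type) where
  mpref : U → List W
  wpref : W → List U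
  mpref_nodup : ∀ m, (mpref m).Nodup
  wpref_nodup : ∀ w, (wpref w).Nodup

namespace SMI

variable {U W : Type}

/-- The (1-based) rank of woman `w` on man `m`'s preference list. -/
def mrank [DecidableEq W] (I : SMI U W) (m : U) (w : W) : ℕ :=
  (I.mpref m).idxOf w + 1

/-- The (1-based) rank of man `m` on woman `w`'s preference list. -/
def wrank [DecidableEq U] (I : SMI U W) (w : W) (m : U) : ℕ :=
  (I.wpref w).idxOf m + 1

/-- `(m, w)` is an acceptable pair if each appears on the other's list. -/
def Acceptable (I : SMI U W) (m : U) (w : W) : Prop :=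
  w ∈ I.mpref m ∧ m ∈ I.wpref w

/-- A matching: a set of acceptable pairs in which every man and every
woman appears at most once. -/
def IsMatching (I : SMI U W) (M : Set (U × W)) : Prop :=
  (∀ p ∈ M, I.Acceptable p.1 p.2) ∧
  (∀ p ∈ M, ∀ q ∈ M, p.1 = q.1 → p = q) ∧
  (∀ p ∈ M, ∀ q ∈ M, p.2 = q.2 → p = q)

/-- Man `m` is matched in `M`. -/
def MMatched (M : Set (U × W)) (m : U) : Prop := ∃ w, (m, w) ∈ M

/-- Woman `w` is matched in `M`. -/
def WMatched (M : Set (U × W)) (w : W) : Prop := ∃ m, (m, w) ∈ M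

/-- `M` matches every man and every woman. -/
def Perfect (M : Set (U × W)) : Prop :=
  (∀ m : U, MMatched M m) ∧ (∀ w : W, WMatched M w)

/-- `(m, w)` is a blocking pair of `M`. -/
def Blocks [DecidableEq U] [DecidableEq W] (I : SMI U W) (M : Set (U × W))
    (m : U) (w : W) : Prop :=
  I.Acceptable m w ∧
  (¬ MMatched M m ∨ ∃ w', (m, w') ∈ M ∧ I.mrank m w < I.mrank m w') ∧
  (¬ WMatched M w ∨ ∃ m', (m', w) ∈ M ∧ I.wrank w m < I.wrank w m')

/-- A stable matching: a matching admitting no blocking pair. -/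
def IsStable [DecidableEq U] [DecidableEq W] (I : SMI U W) (M : Set (U × W)) : Prop :=
  I.IsMatching M ∧ ∀ m w, ¬ I.Blocks M m w

/-- The man-degree `d_U(M)`: the largest rank of any man in `M`. -/
noncomputable def dU [DecidableEq W] (I : SMI U W) (M : Set (U × W)) : ℕ :=
  sSup {r : ℕ | ∃ p ∈ M, r = I.mrank p.1 p.2}

/-- The woman-degree `d_W(M)`: the largest rank of any woman in `M`. -/
noncomputable def dW [DecidableEq U] (I : SMI U W) (M : Set (U × W)) : ℕ :=
  sSup {r : ℕ | ∃ p ∈ M, r = I.wrank p.2 p.1}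

/-- The regret-equality score `r(M) = |d_U(M) - d_W(M)|`. -/
noncomputable def rScore [DecidableEq U] [DecidableEq W] (I : SMI U W) (M : Set (U × W)) : ℕ :=
  ((I.dU M : ℤ) - (I.dW M : ℤ)).natAbs

/-- `M0` is a man-optimal and woman-pessimal stable matching of `I`. -/
def ManOptWomanPess [DecidableEq U] [DecidableEq W] (I : SMI U W)
    (M0 : Set (U × W)) : Prop :=
  I.IsStable M0 ∧ ∀ M, I.IsStable M →
    (∀ m w0 w, (m, w0) ∈ M0 → (m, w) ∈ M → I.mrank m w0 ≤ I.mrank m w) ∧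
    (∀ w m0 m, (m0, w) ∈ M0 → (m, w) ∈ M → I.wrank w m ≤ I.wrank w m0)

/-- `Mz` is a woman-optimal and man-pessimal stable matching of `I`. -/
def WomanOptManPess [DecidableEq U] [DecidableEq W] (I : SMI U W)
    (Mz : Set (U × W)) : Prop :=
  I.IsStable Mz ∧ ∀ M, I.IsStable M →
    (∀ w mz m, (mz, w) ∈ Mz → (m, w) ∈ M → I.wrank w mz ≤ I.wrank w m) ∧
    (∀ m wz w, (m, wz) ∈ Mz → (m, w) ∈ M → I.mrank m w ≤ I.mrank m wz)

/-- The truncated instance `I_T` of `I` at rank `a`: every pair `(m, w)` with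
`rank(m, w) > a` is deleted, i.e. each man's list is cut after his `a`-th
choice, and he is removed from the lists of the women thereby deleted. -/
def truncate [DecidableEq W] (I : SMI U W) (a : ℕ) : SMI U W where
  mpref m := (I.mpref m).take a
  wpref w := (I.wpref w).filter (fun m => decide (w ∈ (I.mpref m).take a))
  mpref_nodup m := ((I.mpref m).take_sublist a).nodup (I.mpref_nodup m)
  wpref_nodup w := (I.wpref_nodup w).filter _

end SMI

/-- If the man-optimal stable matching has man-degree at least its
woman-degree, then it is a regret-equal stable matching. -/
theorem stmt_1 {U W : Type} [Fintype U] [Fintype W] [DecidableEq U] [DecidableEq W]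
    (I : SMI U W)
    (hperf : ∀ M : Set (U × W), I.IsStable M → SMI.Perfect M)
    (M0 : Set (U × W)) (h0 : I.ManOptWomanPess M0)
    (hge : I.dW M0 ≤ I.dU M0) :
    ∀ M : Set (U × W), I.IsStable M → I.rScore M0 ≤ I.rScore M := by
  intro M hM
  have hbddU : ∀ N : Set (U × W), BddAbove {r : ℕ | ∃ p ∈ N, r = I.mrank p.1 p.2} := by
    intro N
    refine ⟨Fintype.card W + 1, ?_⟩
    rintro r ⟨p, _, rfl⟩
    have : (I.mpref p.1).idxOf p.2 ≤ (I.mpref p.1).length := List.idxOf_le_length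
    have hlen : (I.mpref p.1).length ≤ Fintype.card W := by
      simpa using List.Nodup.length_le_card (I.mpref_nodup p.1)
    simp only [SMI.mrank]; omega
  have hbddW : ∀ N : Set (U × W), BddAbove {r : ℕ | ∃ p ∈ N, r = I.wrank p.2 p.1} := by
    intro N
    refine ⟨Fintype.card U + 1, ?_⟩
    rintro r ⟨p, _, rfl⟩
    have : (I.wpref p.2).idxOf p.1 ≤ (I.wpref p.2).length := List.idxOf_le_length
    have hlen : (I.wpref p.2).length ≤ Fintype.card U := by
      simpa using List.Nodup.length_le_card (I.wpref_nodup p.2)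
    simp only [SMI.wrank]; omega
  obtain ⟨hst0, hcomp⟩ := h0
  -- dU M0 ≤ dU M
  have hU : I.dU M0 ≤ I.dU M := by
    rcases Set.eq_empty_or_nonempty {r : ℕ | ∃ p ∈ M0, r = I.mrank p.1 p.2} with he | hne
    · have : I.dU M0 = 0 := by rw [SMI.dU, he]; exact csSup_empty
      omega
    · rw [SMI.dU, SMI.dU]
      apply csSup_le hne
      rintro r ⟨⟨m, w0⟩, hp, rfl⟩
      obtain ⟨w, hw⟩ := (hperf M hM).1 m
      have h1 : I.mrank m w0 ≤ I.mrank m w := (hcomp M hM).1 m w0 w hp hw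
      have h2 : I.mrank m w ≤ sSup {r : ℕ | ∃ p ∈ M, r = I.mrank p.1 p.2} :=
        le_csSup (hbddU M) ⟨(m, w), hw, rfl⟩
      exact h1.trans h2
  -- dW M ≤ dW M0
  have hW : I.dW M ≤ I.dW M0 := by
    rcases Set.eq_empty_or_nonempty {r : ℕ | ∃ p ∈ M, r = I.wrank p.2 p.1} with he | hne
    · have : I.dW M = 0 := by rw [SMI.dW, he]; exact csSup_empty
      omega
    · rw [SMI.dW, SMI.dW]
      apply csSup_le hne
      rintro r ⟨⟨m, w⟩, hp, rfl⟩
      obtain ⟨m0, hm0⟩ := (hperf M0 ⟨hst0.1, hst0.2⟩).2 w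
      have h1 : I.wrank w m ≤ I.wrank w m0 := (hcomp M hM).2 w m0 m hm0 hp
      have h2 : I.wrank w m0 ≤ sSup {r : ℕ | ∃ p ∈ M0, r = I.wrank p.2 p.1} :=
        le_csSup (hbddW M0) ⟨(m0, w), hm0, rfl⟩
      exact h1.trans h2
  unfold SMI.rScore
  omega
end

section
/- Let I be an SMI instance in which every stable matching matches every man and every woman, and let M_0 be a man-optimal and woman-pessimal stable matching of I. Write a_0 = d_U(M_0), b_0 = d_W(M_0) and suppose a_0 < b_0; set d_0 = b_0 − a_0. Then every stable matching M of I with r(M) < d_0 satisfies a_0 ≤ d_U(M) ≤ 2·b_0 − a_0 − 1 and d_U(M) − d_0 + 1 ≤ d_W(M) ≤ b_0. -/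
/-- If `a_0 = d_U(M_0) < b_0 = d_W(M_0)` and `d_0 = b_0 - a_0`, then every
stable matching `M` with `r(M) < d_0` satisfies
`a_0 ≤ d_U(M) ≤ 2·b_0 - a_0 - 1` and `d_U(M) - d_0 + 1 ≤ d_W(M) ≤ b_0`. -/
theorem stmt_2 {U W : Type} [Fintype U] [Fintype W] [DecidableEq U] [DecidableEq W]
    (I : SMI U W)
    (hperf : ∀ M : Set (U × W), I.IsStable M → SMI.Perfect M)
    (M0 : Set (U × W)) (h0 : I.ManOptWomanPess M0)
    (hlt : I.dU M0 < I.dW M0) :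
    ∀ M : Set (U × W), I.IsStable M → I.rScore M < I.dW M0 - I.dU M0 →
      (I.dU M0 : ℤ) ≤ (I.dU M : ℤ) ∧
      (I.dU M : ℤ) ≤ 2 * (I.dW M0 : ℤ) - (I.dU M0 : ℤ) - 1 ∧
      (I.dU M : ℤ) - ((I.dW M0 : ℤ) - (I.dU M0 : ℤ)) + 1 ≤ (I.dW M : ℤ) ∧
      (I.dW M : ℤ) ≤ (I.dW M0 : ℤ) := by
  intro M hM hr
  have hM0 := h0.1
  have hopt := h0.2 M hM
  have hperfM := hperf M hM
  have hperfM0 := hperf M0 hM0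
  have hbddU : ∀ N : Set (U × W), BddAbove {r : ℕ | ∃ p ∈ N, r = I.mrank p.1 p.2} := by
    intro N
    have he : {r : ℕ | ∃ p ∈ N, r = I.mrank p.1 p.2} = (fun p => I.mrank p.1 p.2) '' N := by
      ext r; simp [Set.mem_image, eq_comm]
    rw [he]; exact ((Set.toFinite N).image _).bddAbove
  have hbddW : ∀ N : Set (U × W), BddAbove {r : ℕ | ∃ p ∈ N, r = I.wrank p.2 p.1} := by
    intro N
    have he : {r : ℕ | ∃ p ∈ N, r = I.wrank p.2 p.1} = (fun p => I.wrank p.2 p.1) '' N := by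
      ext r; simp [Set.mem_image, eq_comm]
    rw [he]; exact ((Set.toFinite N).image _).bddAbove
  have ha : I.dU M0 ≤ I.dU M := by
    rcases Set.eq_empty_or_nonempty {r : ℕ | ∃ p ∈ M0, r = I.mrank p.1 p.2} with h | h
    · rw [SMI.dU, h, csSup_empty]; exact Nat.zero_le _
    · apply csSup_le h
      rintro r ⟨⟨m, w0⟩, hmw0, rfl⟩
      obtain ⟨w, hw⟩ := hperfM.1 m
      calc I.mrank m w0 ≤ I.mrank m w := hopt.1 m w0 w hmw0 hw
        _ ≤ I.dU M := le_csSup (hbddU M) ⟨(m, w), hw, rfl⟩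
  have hb : I.dW M ≤ I.dW M0 := by
    rcases Set.eq_empty_or_nonempty {r : ℕ | ∃ p ∈ M, r = I.wrank p.2 p.1} with h | h
    · rw [SMI.dW, h, csSup_empty]; exact Nat.zero_le _
    · apply csSup_le h
      rintro r ⟨⟨m, w⟩, hmw, rfl⟩
      obtain ⟨m0, hm0⟩ := hperfM0.2 w
      calc I.wrank w m ≤ I.wrank w m0 := hopt.2 w m0 m hm0 hmw
        _ ≤ I.dW M0 := le_csSup (hbddW M0) ⟨(m0, w), hm0, rfl⟩
  simp only [SMI.rScore] at hr
  omega
end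

section
/- Let I be an SMI instance in which every stable matching matches every man and every woman, and let M_0 be a man-optimal and woman-pessimal stable matching of I with a_0 = d_U(M_0) < b_0 = d_W(M_0). Then there exists a regret-equal stable matching M* of I (i.e., a stable matching minimising the regret-equality score r over all stable matchings of I) with d_U(M*) ≤ 2·b_0 − a_0 − 1. -/
/-- If `a_0 = d_U(M_0) < b_0 = d_W(M_0)` then there is a regret-equal stable
matching `M*` with `d_U(M*) ≤ 2·b_0 - a_0 - 1`. -/
theorem stmt_3 {U W : Type} [Fintype U] [Fintype W] [DecidableEq U] [DecidableEq W]
    (I : SMI U W)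
    (hperf : ∀ M : Set (U × W), I.IsStable M → SMI.Perfect M)
    (M0 : Set (U × W)) (h0 : I.ManOptWomanPess M0)
    (hlt : I.dU M0 < I.dW M0) :
    ∃ Mstar : Set (U × W), I.IsStable Mstar ∧
      (∀ M : Set (U × W), I.IsStable M → I.rScore Mstar ≤ I.rScore M) ∧
      (I.dU Mstar : ℤ) ≤ 2 * (I.dW M0 : ℤ) - (I.dU M0 : ℤ) - 1 := by
  -- Any stable matching has woman-degree at most dW M0
  have hb : ∀ M, I.IsStable M → I.dW M ≤ I.dW M0 := by
    intro M hM
    apply csSup_le'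
    rintro r ⟨⟨m, w⟩, hmw, rfl⟩
    dsimp only
    obtain ⟨m0, hm0⟩ := (hperf M0 h0.1).2 w
    have h1 : I.wrank w m ≤ I.wrank w m0 := (h0.2 M hM).2 w m0 m hm0 hmw
    have h2 : I.wrank w m0 ≤ I.dW M0 := by
      apply le_csSup
      · refine ⟨Fintype.card U + 1, ?_⟩
        rintro r ⟨⟨m', w'⟩, hmw', rfl⟩
        have h3 := List.idxOf_le_length (a := m') (l := I.wpref w')
        have h4 := (I.wpref_nodup w').length_le_card
        simp only [SMI.wrank]
        omega
      · exact ⟨(m0, w), hm0, rfl⟩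
    omega
  have hdUle : ∀ M : Set (U × W), (I.dU M : ℤ) ≤ (I.dW M : ℤ) + (I.rScore M : ℤ) := by
    intro M
    show (I.dU M : ℤ) ≤ (I.dW M : ℤ) + ((((I.dU M : ℤ) - (I.dW M : ℤ)).natAbs : ℤ))
    omega
  have hr0 : (I.rScore M0 : ℤ) = (I.dW M0 : ℤ) - (I.dU M0 : ℤ) := by
    show ((((I.dU M0 : ℤ) - (I.dW M0 : ℤ)).natAbs : ℤ)) = _
    omega
  -- take a matching achieving the minimum regret score
  set S : Set ℕ := {r : ℕ | ∃ M, I.IsStable M ∧ I.rScore M = r} with hS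
  have hne : I.rScore M0 ∈ S := ⟨M0, h0.1, rfl⟩
  obtain ⟨Ms, hMs, hrMs⟩ : sInf S ∈ S := Nat.sInf_mem ⟨_, hne⟩
  have hmin : ∀ M : Set (U × W), I.IsStable M → I.rScore Ms ≤ I.rScore M := by
    intro M hM
    rw [hrMs]
    exact Nat.sInf_le ⟨M, hM, rfl⟩
  by_cases hcase : I.rScore Ms < I.rScore M0
  · refine ⟨Ms, hMs, hmin, ?_⟩
    have h1 := hdUle Ms
    have h2 := hb Ms hMs
    omega
  · refine ⟨M0, h0.1, fun M hM => le_trans (le_of_not_gt hcase) (hmin M hM), ?_⟩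
    omega
end

section
/- Let I be an SMI instance, let a be a positive integer, and let I_T be the truncated instance of I at rank a. If M' is a stable matching of I_T that matches every man, then M' is a stable matching of I, and rank(m, M'(m)) ≤ a for every man m. -/
theorem indexOf_take {α} [DecidableEq α] {l : List α} {a : ℕ} {w : α}
    (h : w ∈ l.take a) : l.idxOf w = (l.take a).idxOf w := by
  conv_lhs => rw [← List.take_append_drop a l]
  exact List.idxOf_append_of_mem h

theorem mem_take_of_indexOf {α} [DecidableEq α] {l : List α} {a : ℕ} {w : α}
    (hw : w ∈ l) (hi : l.idxOf w < a) : w ∈ l.take a := by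
  have hlen := List.idxOf_lt_length_iff.2 hw
  have : (l.take a)[l.idxOf w]'(by simp [hlen, hi]) = w := by
    rw [List.getElem_take]; exact List.getElem_idxOf hlen
  rw [← this]; exact List.getElem_mem _

theorem filter_order {α} [DecidableEq α] (p : α → Bool) :
    ∀ (l : List α), l.Nodup → ∀ x y, x ∈ l.filter p → y ∈ l.filter p →
      l.idxOf x < l.idxOf y → (l.filter p).idxOf x < (l.filter p).idxOf y := by
  intro l
  induction l with
  | nil => simp
  | cons h t ih =>
    intro hnd x y hx hy hlt
    have hndt := (List.nodup_cons.1 hnd).2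
    have hh := (List.nodup_cons.1 hnd).1
    by_cases hph : p h
    · rw [List.filter_cons_of_pos hph] at hx hy ⊢
      by_cases hxh : x = h
      · subst hxh
        have hyh : y ≠ x := by
          rintro rfl; exact absurd hlt (lt_irrefl _)
        have hyt : y ∈ t.filter p := by
          rcases List.mem_cons.1 hy with h1 | h1; exact absurd h1 hyh; exact h1
        rw [List.idxOf_cons_self, List.idxOf_cons_ne _ (Ne.symm hyh)]; exact Nat.succ_pos _
      · have hxt : x ∈ t.filter p := by
          rcases List.mem_cons.1 hx with h1 | h1; exact absurd h1 hxh; exact h1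
        have hyh : y ≠ h := by
          rintro rfl
          rw [List.idxOf_cons_self] at hlt
          omega
        have hyt : y ∈ t.filter p := by
          rcases List.mem_cons.1 hy with h1 | h1; exact absurd h1 hyh; exact h1
        rw [List.idxOf_cons_ne _ (Ne.symm hxh), List.idxOf_cons_ne _ (Ne.symm hyh)] at hlt ⊢
        have := ih hndt x y hxt hyt (by omega)
        omega
    · rw [List.filter_cons_of_neg hph] at hx hy ⊢
      have hxh : x ≠ h := by rintro rfl; exact hph (List.of_mem_filter hx)
      have hyh : y ≠ h := by rintro rfl; exact hph (List.of_mem_filter hy)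
      rw [List.idxOf_cons_ne _ (Ne.symm hxh), List.idxOf_cons_ne _ (Ne.symm hyh)] at hlt
      exact ih hndt x y hx hy (by omega)

/-- A stable matching of the truncated instance `I_T` matching every man is a
stable matching of `I`, in which every man has rank at most `a`. -/
theorem stmt_4 {U W : Type} [Fintype U] [Fintype W] [DecidableEq U] [DecidableEq W]
    (I : SMI U W) (a : ℕ) (ha : 0 < a)
    (M' : Set (U × W)) (hM' : (I.truncate a).IsStable M')
    (hall : ∀ m : U, SMI.MMatched M' m) :
    I.IsStable M' ∧ ∀ (m : U) (w : W), (m, w) ∈ M' → I.mrank m w ≤ a := by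
  classical
  obtain ⟨⟨haccT, hu1, hu2⟩, hstab⟩ := hM'
  -- rank bound
  have hrank : ∀ (m : U) (w : W), (m, w) ∈ M' → I.mrank m w ≤ a := by
    intro m w hmw
    have hw : w ∈ (I.mpref m).take a := (haccT _ hmw).1
    have h1 : (I.mpref m).idxOf w = ((I.mpref m).take a).idxOf w := indexOf_take hw
    have h2 : ((I.mpref m).take a).idxOf w < ((I.mpref m).take a).length :=
      List.idxOf_lt_length_iff.2 hw
    have h3 : ((I.mpref m).take a).length ≤ a := by
      simpa using List.length_take_le a (I.mpref m)
    unfold SMI.mrank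
    omega
  refine ⟨⟨⟨?_, hu1, hu2⟩, ?_⟩, hrank⟩
  · intro p hp
    obtain ⟨h1, h2⟩ := haccT p hp
    exact ⟨List.take_subset _ _ h1, List.filter_subset' _ h2⟩
  · rintro m w ⟨⟨hwm, hmw⟩, hmanc, hwomc⟩
    rcases hmanc with h | ⟨w', hw', hlt⟩
    · exact h (hall m)
    · have hw'a : I.mrank m w' ≤ a := hrank m w' hw'
      have hidx : (I.mpref m).idxOf w < a := by
        unfold SMI.mrank at hlt hw'a; omega
      have hwT : w ∈ (I.mpref m).take a := mem_take_of_indexOf hwm hidx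
      have haccw : (I.truncate a).Acceptable m w := by
        refine ⟨hwT, ?_⟩
        show m ∈ (I.wpref w).filter _
        rw [List.mem_filter]
        exact ⟨hmw, by simpa using hwT⟩
      have hmr : ∀ w0 : W, w0 ∈ (I.mpref m).take a →
          (I.truncate a).mrank m w0 = I.mrank m w0 := by
        intro w0 h0
        unfold SMI.mrank
        show ((I.mpref m).take a).idxOf w0 + 1 = _
        rw [← indexOf_take h0]
      have hmanT : ∃ w'', (m, w'') ∈ M' ∧
          (I.truncate a).mrank m w < (I.truncate a).mrank m w'' := by
        refine ⟨w', hw', ?_⟩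
        rw [hmr w hwT, hmr w' (haccT _ hw').1]
        exact hlt
      rcases hwomc with h | ⟨m', hm', hlt'⟩
      · exact hstab m w ⟨haccw, Or.inr hmanT, Or.inl h⟩
      · have hmf : m ∈ (I.wpref w).filter (fun m0 => decide (w ∈ (I.mpref m0).take a)) := by
          rw [List.mem_filter]; exact ⟨hmw, by simpa using hwT⟩
        have hm'f : m' ∈ (I.wpref w).filter (fun m0 => decide (w ∈ (I.mpref m0).take a)) :=
          (haccT _ hm').2
        have hlt2 : (I.wpref w).idxOf m < (I.wpref w).idxOf m' := by
          unfold SMI.wrank at hlt'; omega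
        have := filter_order _ (I.wpref w) (I.wpref_nodup w) m m' hmf hm'f hlt2
        refine hstab m w ⟨haccw, Or.inr hmanT, Or.inr ⟨m', hm', ?_⟩⟩
        show (List.filter _ _).idxOf m + 1 < (List.filter _ _).idxOf m' + 1
        omega
end

section
/- Let M and N be stable matchings of an SMI instance I, each matching every man and every woman. If rank(w, N(w)) ≤ rank(w, M(w)) for every woman w, then rank(m, M(m)) ≤ rank(m, N(m)) for every man m. -/
/-- If every woman is weakly better off in `N` than in `M` (both stable and
perfect), then every man is weakly better off in `M` than in `N`. -/
theorem stmt_7 {U W : Type} [Fintype U] [Fintype W] [DecidableEq U] [DecidableEq W]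
    (I : SMI U W)
    (M N : Set (U × W)) (hM : I.IsStable M) (hN : I.IsStable N)
    (hMp : SMI.Perfect M) (hNp : SMI.Perfect N)
    (h : ∀ (w : W) (m m' : U), (m, w) ∈ N → (m', w) ∈ M → I.wrank w m ≤ I.wrank w m') :
    ∀ (m : U) (w w' : W), (m, w) ∈ M → (m, w') ∈ N → I.mrank m w ≤ I.mrank m w' := by
  intro m w w' hMw hNw'
  by_contra hlt
  push_neg at hlt
  obtain ⟨m'', hm''⟩ := hMp.2 w'
  have hle : I.wrank w' m ≤ I.wrank w' m'' := h w' m m'' hNw' hm''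
  have hmem : m ∈ I.wpref w' := (hN.1.1 (m, w') hNw').2
  have hmem'' : m'' ∈ I.wpref w' := (hM.1.1 (m'', w') hm'').2
  have hne : m ≠ m'' := by
    rintro rfl
    have := hM.1.2.1 (m, w) hMw (m, w') hm'' rfl
    have hww' : w = w' := congrArg Prod.snd this
    subst hww'
    exact absurd hlt (lt_irrefl _)
  have hstrict : I.wrank w' m < I.wrank w' m'' := by
    rcases lt_or_eq_of_le hle with h1 | h1
    · exact h1
    · exact absurd ((List.idxOf_inj (y := m'') hmem).mp (by
        simpa [SMI.wrank] using h1)) hne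
  exact hM.2 m w' ⟨hN.1.1 (m, w') hNw', Or.inr ⟨w, hMw, hlt⟩,
    Or.inr ⟨m'', hm'', hstrict⟩⟩
end

section
/- Let I be an SMI instance in which every stable matching matches every man and every woman, let a be a positive integer, and let I_T be the truncated instance of I at rank a. Suppose M is a stable matching of I with d_U(M) = a, and suppose N is a stable matching of I_T that matches every man and every woman and is woman-optimal in I_T, i.e., for every stable matching M' of I_T and every woman w matched in M', rank(w, N(w)) ≤ rank(w, M'(w)). Then N is a stable matching of I, d_U(N) = a, and d_W(N) ≤ d_W(M). -/

private lemma indexOf_take_eq {α} [DecidableEq α] :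
    ∀ (l : List α) (a : ℕ) (x : α), x ∈ l.take a → (l.take a).idxOf x = l.idxOf x := by
  intro l
  induction l with
  | nil => simp
  | cons h t ih =>
    intro a x hx
    cases a with
    | zero => simp at hx
    | succ n =>
      simp only [List.take_succ_cons] at hx ⊢
      by_cases hxh : h = x
      · simp [List.idxOf_cons, hxh]
      · have : x ∈ t.take n := by
          rcases List.mem_cons.1 hx with h1 | h1
          · exact absurd h1.symm hxh
          · exact h1
        simp [List.idxOf_cons, hxh, ih n x this]

private lemma mem_take_of_indexOf_lt {α} [DecidableEq α] :
    ∀ (l : List α) (a : ℕ) (x : α), x ∈ l → l.idxOf x < a → x ∈ l.take a := by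
  intro l
  induction l with
  | nil => simp
  | cons h t ih =>
    intro a x hx hlt
    by_cases hxh : h = x
    · cases a with
      | zero => omega
      | succ n => simp [List.take_succ_cons, hxh]
    · have hxt : x ∈ t := by
        rcases List.mem_cons.1 hx with h1 | h1
        · exact absurd h1.symm hxh
        · exact h1
      have : List.idxOf x (h :: t) = List.idxOf x t + 1 := by
        simp [List.idxOf_cons, hxh]
      cases a with
      | zero => omega
      | succ n =>
        rw [this] at hlt
        simp only [List.take_succ_cons]
        exact List.mem_cons_of_mem _ (ih n x hxt (by omega))

private lemma indexOf_take_lt {α} [DecidableEq α] {l : List α} {a : ℕ} {x : α}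
    (h : x ∈ l.take a) : l.idxOf x < a := by
  have h1 := indexOf_take_eq l a x h
  have h2 : (l.take a).idxOf x < (l.take a).length := List.idxOf_lt_length_iff.2 h
  have h3 : (l.take a).length ≤ a := by simp
  omega

private lemma indexOf_filter_lt {α} [DecidableEq α] (p : α → Bool) :
    ∀ (l : List α) (x y : α), x ∈ l.filter p → y ∈ l.filter p →
      (l.filter p).idxOf x < (l.filter p).idxOf y → l.idxOf x < l.idxOf y := by
  intro l
  induction l with
  | nil => simp
  | cons h t ih =>
    intro x y hx hy hlt
    by_cases hp : p h
    · rw [List.filter_cons, if_pos hp] at hx hy hlt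
      by_cases hxh : h = x
      · subst hxh
        have hyh : h ≠ y := by
          intro e; subst e; simp at hlt
        simp [List.idxOf_cons, hyh]
      · have hyh : h ≠ y := by
          intro e; subst e
          simp [List.idxOf_cons, hxh] at hlt
        have hxt : x ∈ t.filter p := by
          rcases List.mem_cons.1 hx with h1 | h1
          · exact absurd h1.symm hxh
          · exact h1
        have hyt : y ∈ t.filter p := by
          rcases List.mem_cons.1 hy with h1 | h1
          · exact absurd h1.symm hyh
          · exact h1
        have hlt' : (t.filter p).idxOf x < (t.filter p).idxOf y := by
          simp [List.idxOf_cons, hxh, hyh] at hlt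
          omega
        have := ih x y hxt hyt hlt'
        simp [List.idxOf_cons, hxh, hyh]
        omega
    · rw [List.filter_cons, if_neg hp] at hx hy hlt
      have hxh : h ≠ x := by
        intro e; subst e
        exact hp (List.of_mem_filter hx)
      have hyh : h ≠ y := by
        intro e; subst e
        exact hp (List.of_mem_filter hy)
      have := ih x y hx hy hlt
      simp [List.idxOf_cons, hxh, hyh]
      omega


namespace SMI

set_option linter.unusedSectionVars false

variable {U W : Type} [DecidableEq U] [DecidableEq W]

private lemma mem_trunc_wpref (I : SMI U W) (a : ℕ) {m : U} {w : W} :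
    m ∈ (I.truncate a).wpref w ↔ m ∈ I.wpref w ∧ w ∈ (I.mpref m).take a := by
  simp [truncate, List.mem_filter]

private lemma acceptable_trunc_iff (I : SMI U W) (a : ℕ) {m : U} {w : W} :
    (I.truncate a).Acceptable m w ↔ I.Acceptable m w ∧ w ∈ (I.mpref m).take a := by
  constructor
  · rintro ⟨h1, h2⟩
    rw [mem_trunc_wpref] at h2
    exact ⟨⟨List.take_subset a _ h1, h2.1⟩, h2.2⟩
  · rintro ⟨⟨h1, h2⟩, h3⟩
    exact ⟨h3, (mem_trunc_wpref I a).2 ⟨h2, h3⟩⟩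

private lemma mrank_trunc (I : SMI U W) (a : ℕ) {m : U} {w : W}
    (h : w ∈ (I.mpref m).take a) : (I.truncate a).mrank m w = I.mrank m w := by
  unfold mrank
  have : (I.truncate a).mpref m = (I.mpref m).take a := rfl
  rw [this, indexOf_take_eq _ _ _ h]

private lemma mrank_le_of_mem_take (I : SMI U W) (a : ℕ) {m : U} {w : W}
    (h : w ∈ (I.mpref m).take a) : I.mrank m w ≤ a := by
  have := indexOf_take_lt h
  unfold mrank
  omega

private lemma mem_take_of_mrank_le (I : SMI U W) (a : ℕ) {m : U} {w : W}
    (h1 : w ∈ I.mpref m) (h2 : I.mrank m w ≤ a) : w ∈ (I.mpref m).take a := by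
  refine mem_take_of_indexOf_lt _ a _ h1 ?_
  unfold mrank at h2
  omega

private lemma wrank_trunc_lt (I : SMI U W) (a : ℕ) {m m' : U} {w : W}
    (h1 : m ∈ (I.truncate a).wpref w) (h2 : m' ∈ (I.truncate a).wpref w)
    (h : (I.truncate a).wrank w m < (I.truncate a).wrank w m') :
    I.wrank w m < I.wrank w m' := by
  unfold wrank at h ⊢
  have hw : (I.truncate a).wpref w
      = (I.wpref w).filter (fun u => decide (w ∈ (I.mpref u).take a)) := rfl
  rw [hw] at h1 h2 h
  have := indexOf_filter_lt _ (I.wpref w) m m' h1 h2 (by omega)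
  omega

private lemma wrank_trunc_le (I : SMI U W) (a : ℕ) {m m' : U} {w : W}
    (h1 : m ∈ (I.truncate a).wpref w) (h2 : m' ∈ (I.truncate a).wpref w)
    (h : (I.truncate a).wrank w m ≤ (I.truncate a).wrank w m') :
    I.wrank w m ≤ I.wrank w m' := by
  rcases lt_or_eq_of_le h with hlt | heq
  · exact le_of_lt (wrank_trunc_lt I a h1 h2 hlt)
  · have : m = m' := by
      unfold wrank at heq
      exact (List.idxOf_inj h1).1 (by omega)
    subst this
    exact le_rfl

private lemma wrank_trunc_strict (I : SMI U W) (a : ℕ) {m m' : U} {w : W}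
    (h1 : m ∈ (I.truncate a).wpref w) (h2 : m' ∈ (I.truncate a).wpref w)
    (h : I.wrank w m < I.wrank w m') :
    (I.truncate a).wrank w m < (I.truncate a).wrank w m' := by
  by_contra hc
  have := wrank_trunc_le I a h2 h1 (by omega)
  omega

end SMI

private lemma bddAbove_rank_set {α : Type} [Fintype α] (S : Set α) (f : α → ℕ) :
    BddAbove {r : ℕ | ∃ p ∈ S, r = f p} := by
  have he : {r : ℕ | ∃ p ∈ S, r = f p} = f '' S := by
    ext r; simp [eq_comm]
  rw [he]
  exact (S.toFinite.image f).bddAbove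

/-- If `M` is a stable matching of `I` with `d_U(M) = a` and `N` is a
woman-optimal stable matching of the truncated instance `I_T` matching
everyone, then `N` is stable in `I` with `d_U(N) = a` and `d_W(N) ≤ d_W(M)`. -/
theorem stmt_8 {U W : Type} [Fintype U] [Fintype W] [DecidableEq U] [DecidableEq W]
    (I : SMI U W)
    (hperf : ∀ M : Set (U × W), I.IsStable M → SMI.Perfect M)
    (a : ℕ) (ha : 0 < a)
    (M : Set (U × W)) (hM : I.IsStable M) (hdU : I.dU M = a)
    (N : Set (U × W)) (hN : (I.truncate a).IsStable N) (hNp : SMI.Perfect N)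
    (hNopt : ∀ M' : Set (U × W), (I.truncate a).IsStable M' →
      ∀ (w : W) (m m' : U), (m, w) ∈ N → (m', w) ∈ M' →
        (I.truncate a).wrank w m ≤ (I.truncate a).wrank w m') :
    I.IsStable N ∧ I.dU N = a ∧ I.dW N ≤ I.dW M := by
  classical
  set T := I.truncate a with hTdef
  -- every pair of N is acceptable in I, and on a truncated list
  have hNaccT : ∀ p ∈ N, T.Acceptable p.1 p.2 := hN.1.1
  have hNtake : ∀ p ∈ N, I.Acceptable p.1 p.2 ∧ p.2 ∈ (I.mpref p.1).take a :=
    fun p hp => (I.acceptable_trunc_iff a).1 (hNaccT p hp)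
  -- M facts
  have hMperf : SMI.Perfect M := hperf M hM
  have hMrle : ∀ p ∈ M, I.mrank p.1 p.2 ≤ a := by
    intro p hp
    have : I.mrank p.1 p.2 ≤ I.dU M :=
      le_csSup (bddAbove_rank_set M (fun p => I.mrank p.1 p.2)) ⟨p, hp, rfl⟩
    omega
  have hMtake : ∀ p ∈ M, p.2 ∈ (I.mpref p.1).take a := by
    intro p hp
    exact I.mem_take_of_mrank_le a (hM.1.1 p hp).1 (hMrle p hp)
  have hMaccT : ∀ p ∈ M, T.Acceptable p.1 p.2 := by
    intro p hp
    exact (I.acceptable_trunc_iff a).2 ⟨hM.1.1 p hp, hMtake p hp⟩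
  -- M is stable in the truncated instance
  have hMT : T.IsStable M := by
    refine ⟨⟨hMaccT, hM.1.2.1, hM.1.2.2⟩, ?_⟩
    intro m w hb
    obtain ⟨hacc, hbm, hbw⟩ := hb
    obtain ⟨haccI, hwtake⟩ := (I.acceptable_trunc_iff a).1 hacc
    apply hM.2 m w
    refine ⟨haccI, ?_, ?_⟩
    · rcases hbm with h | ⟨w', hw', hlt⟩
      · exact Or.inl h
      · refine Or.inr ⟨w', hw', ?_⟩
        rwa [I.mrank_trunc a hwtake, I.mrank_trunc a (hMtake (m, w') hw')] at hlt
    · rcases hbw with h | ⟨m', hm', hlt⟩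
      · exact Or.inl h
      · refine Or.inr ⟨m', hm', ?_⟩
        exact I.wrank_trunc_lt a hacc.2 (hMaccT (m', w) hm').2 hlt
  -- N is stable in I
  have hNI : I.IsStable N := by
    refine ⟨⟨fun p hp => (hNtake p hp).1, hN.1.2.1, hN.1.2.2⟩, ?_⟩
    intro m w hb
    obtain ⟨hacc, hbm, hbw⟩ := hb
    rcases hbm with h | ⟨w', hw', hltm⟩
    · exact h (hNp.1 m)
    rcases hbw with h | ⟨m', hm', hltw⟩
    · exact h (hNp.2 w)
    -- w is within m's truncated list
    have hw'take : w' ∈ (I.mpref m).take a := (hNtake (m, w') hw').2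
    have hwa : I.mrank m w ≤ a := by
      have := I.mrank_le_of_mem_take a hw'take
      omega
    have hwtake : w ∈ (I.mpref m).take a := I.mem_take_of_mrank_le a hacc.1 hwa
    have haccT : T.Acceptable m w := (I.acceptable_trunc_iff a).2 ⟨hacc, hwtake⟩
    apply hN.2 m w
    refine ⟨haccT, Or.inr ⟨w', hw', ?_⟩, Or.inr ⟨m', hm', ?_⟩⟩
    · rwa [I.mrank_trunc a hwtake, I.mrank_trunc a hw'take]
    · exact I.wrank_trunc_strict a haccT.2 (hNaccT (m', w) hm').2 hltw
  -- N is man-pessimal vs M in the truncated instance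
  have hpess : ∀ m wN wM, (m, wN) ∈ N → (m, wM) ∈ M →
      T.mrank m wM ≤ T.mrank m wN := by
    intro m wN wM hmwN hmwM
    by_contra hc
    push_neg at hc
    obtain ⟨m', hm'⟩ := hMperf.2 wN
    have hle : T.wrank wN m ≤ T.wrank wN m' := hNopt M hMT wN m m' hmwN hm'
    have hne : m ≠ m' := by
      intro e
      subst e
      have := hM.1.2.1 (m, wN) hm' (m, wM) hmwM rfl
      have hw : wN = wM := congrArg Prod.snd this
      subst hw
      omega
    have hstrict : T.wrank wN m < T.wrank wN m' := by
      rcases lt_or_eq_of_le hle with h | h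
      · exact h
      · exfalso
        apply hne
        have h1 : m ∈ T.wpref wN := (hNaccT (m, wN) hmwN).2
        have h2 : m' ∈ T.wpref wN := (hMaccT (m', wN) hm').2
        unfold SMI.wrank at h
        exact (List.idxOf_inj h1).1 (by omega)
    exact hMT.2 m wN ⟨hNaccT (m, wN) hmwN, Or.inr ⟨wM, hmwM, hc⟩,
      Or.inr ⟨m', hm', hstrict⟩⟩
  -- d_U(N) = a
  have hdUN : I.dU N = a := by
    have hbddM := bddAbove_rank_set M (fun p => I.mrank p.1 p.2)
    have hbddN := bddAbove_rank_set N (fun p => I.mrank p.1 p.2)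
    have hSMne : {r : ℕ | ∃ p ∈ M, r = I.mrank p.1 p.2}.Nonempty := by
      by_contra hc
      rw [Set.not_nonempty_iff_eq_empty] at hc
      rw [SMI.dU, hc, csSup_empty] at hdU
      simp at hdU
      omega
    have hamem : a ∈ {r : ℕ | ∃ p ∈ M, r = I.mrank p.1 p.2} := by
      rw [← hdU]
      exact Nat.sSup_mem hSMne hbddM
    obtain ⟨⟨m, wM⟩, hpM, hra⟩ := hamem
    replace hra : a = I.mrank m wM := hra
    obtain ⟨wN, hwN⟩ := hNp.1 m
    have hp := hpess m wN wM hwN hpM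
    rw [I.mrank_trunc a (hMtake (m, wM) hpM),
      I.mrank_trunc a (hNtake (m, wN) hwN).2] at hp
    replace hp : I.mrank m wM ≤ I.mrank m wN := hp
    have hNle : I.mrank m wN ≤ a := I.mrank_le_of_mem_take a (hNtake (m, wN) hwN).2
    have heq : I.mrank m wN = a := by omega
    have hamem' : a ∈ {r : ℕ | ∃ p ∈ N, r = I.mrank p.1 p.2} := ⟨(m, wN), hwN, heq.symm⟩
    apply le_antisymm
    · refine csSup_le ⟨a, hamem'⟩ ?_
      rintro r ⟨p, hp', rfl⟩
      exact I.mrank_le_of_mem_take a (hNtake p hp').2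
    · exact le_csSup hbddN hamem'
  -- d_W(N) ≤ d_W(M)
  have hdWN : I.dW N ≤ I.dW M := by
    rcases Set.eq_empty_or_nonempty {r : ℕ | ∃ p ∈ N, r = I.wrank p.2 p.1} with he | hne
    · rw [SMI.dW, he, csSup_empty]
      exact Nat.zero_le _
    apply csSup_le hne
    rintro r ⟨⟨m, w⟩, hp, rfl⟩
    show I.wrank w m ≤ I.dW M
    obtain ⟨m', hm'⟩ := hMperf.2 w
    have hle : T.wrank w m ≤ T.wrank w m' := hNopt M hMT w m m' hp hm'
    have hleI : I.wrank w m ≤ I.wrank w m' :=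
      I.wrank_trunc_le a (hNaccT (m, w) hp).2 (hMaccT (m', w) hm').2 hle
    have : I.wrank w m' ≤ I.dW M :=
      le_csSup (bddAbove_rank_set M (fun p => I.wrank p.2 p.1)) ⟨(m', w), hm', rfl⟩
    omega
  exact ⟨hNI, hdUN, hdWN⟩
end

section
/- Let I be an SMI instance in which every stable matching matches every man and every woman, let M_0 be a man-optimal and woman-pessimal stable matching of I, and let M_z be a woman-optimal and man-pessimal stable matching of I. Then there exists an integer a with d_U(M_0) ≤ a ≤ d_U(M_z) and a stable matching N of the truncated instance I_T of I at rank a such that N matches every man and every woman, N is woman-optimal in I_T (for every stable matching M' of I_T and every woman w matched in M', rank(w, N(w)) ≤ rank(w, M'(w))), N is a stable matching of I, and N minimises the regret sum d_U + d_W over all stable matchings of I. -/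
section ListLemmas
variable {α : Type} [DecidableEq α]

theorem my_indexOf_lt_of_mem_take {l : List α} {a : ℕ} {w : α}
    (h : w ∈ l.take a) : l.idxOf w < a := by
  induction l generalizing a with
  | nil => simp at h
  | cons x t ih =>
    cases a with
    | zero => simp at h
    | succ b =>
      simp only [List.take_succ_cons, List.mem_cons] at h
      rcases h with h | h
      · subst h; simp
      · by_cases hx : w = x
        · subst hx; simp
        · rw [List.idxOf_cons_ne _ (by exact fun hh => hx hh.symm)]
          exact Nat.succ_lt_succ (ih h)

theorem my_mem_take_of_indexOf_lt {l : List α} {a : ℕ} {w : α}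
    (hm : w ∈ l) (h : l.idxOf w < a) : w ∈ l.take a := by
  induction l generalizing a with
  | nil => simp at hm
  | cons x t ih =>
    cases a with
    | zero => exact absurd h (by simp)
    | succ b =>
      simp only [List.take_succ_cons, List.mem_cons]
      by_cases hx : w = x
      · exact Or.inl hx
      · refine Or.inr (ih (by simpa [hx] using hm) ?_)
        rw [List.idxOf_cons_ne _ (by exact fun hh => hx hh.symm)] at h
        exact Nat.lt_of_succ_lt_succ h

theorem my_sublist_indexOf_lt_iff {s l : List α} (h : s.Sublist l) (hl : l.Nodup)
    {x y : α} (hx : x ∈ s) (hy : y ∈ s) :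
    s.idxOf x < s.idxOf y ↔ l.idxOf x < l.idxOf y := by
  induction h with
  | slnil => simp at hx
  | @cons s0 l0 a h ih =>
    have hnd : l0.Nodup := (List.nodup_cons.mp hl).2
    have hna : a ∉ l0 := (List.nodup_cons.mp hl).1
    have hxa : x ≠ a := fun hh => hna (hh ▸ h.mem hx)
    have hya : y ≠ a := fun hh => hna (hh ▸ h.mem hy)
    rw [List.idxOf_cons_ne _ (fun hh => hxa hh.symm),
        List.idxOf_cons_ne _ (fun hh => hya hh.symm)]
    rw [ih hnd hx hy]
    omega
  | @cons_cons s0 l0 a h ih =>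
    have hnd : l0.Nodup := (List.nodup_cons.mp hl).2
    have hna : a ∉ l0 := (List.nodup_cons.mp hl).1
    by_cases hxa : x = a
    · subst hxa
      rw [List.idxOf_cons_self, List.idxOf_cons_self]
      by_cases hya : y = x
      · subst hya; simp
      · rw [List.idxOf_cons_ne _ (fun hh => hya hh.symm),
            List.idxOf_cons_ne _ (fun hh => hya hh.symm)]
        simp
    · have hxs : x ∈ s0 := by
        rcases List.mem_cons.mp hx with hh | hh
        · exact absurd hh hxa
        · exact hh
      by_cases hya : y = a
      · subst hya
        rw [List.idxOf_cons_self, List.idxOf_cons_self]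
        simp
      · have hys : y ∈ s0 := by
          rcases List.mem_cons.mp hy with hh | hh
          · exact absurd hh hya
          · exact hh
        rw [List.idxOf_cons_ne _ (fun hh => hxa hh.symm),
            List.idxOf_cons_ne _ (fun hh => hya hh.symm),
            List.idxOf_cons_ne _ (fun hh => hxa hh.symm),
            List.idxOf_cons_ne _ (fun hh => hya hh.symm)]
        have := ih hnd hxs hys
        omega

theorem my_sublist_indexOf_le_iff {s l : List α} (h : s.Sublist l) (hl : l.Nodup)
    {x y : α} (hx : x ∈ s) (hy : y ∈ s) :
    s.idxOf x ≤ s.idxOf y ↔ l.idxOf x ≤ l.idxOf y := by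
  have h1 := my_sublist_indexOf_lt_iff h hl hy hx
  omega
end ListLemmas

section SMILemmas
set_option linter.unusedSectionVars false
open SMI
variable {U W : Type} [DecidableEq U] [DecidableEq W]

theorem my_wrank_inj (I : SMI U W) {w : W} {m m' : U} (h1 : m ∈ I.wpref w)
    (h2 : m' ∈ I.wpref w) (h : I.wrank w m = I.wrank w m') : m = m' := by
  unfold SMI.wrank at h
  exact (List.idxOf_inj h1).mp (by omega)

theorem my_mrank_inj (I : SMI U W) {m : U} {w w' : W} (h1 : w ∈ I.mpref m)
    (h2 : w' ∈ I.mpref m) (h : I.mrank m w = I.mrank m w') : w = w' := by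
  unfold SMI.mrank at h
  exact (List.idxOf_inj h1).mp (by omega)

theorem my_trunc_acc (I : SMI U W) {a : ℕ} {m : U} {w : W} :
    (I.truncate a).Acceptable m w ↔
      I.Acceptable m w ∧ w ∈ (I.mpref m).take a := by
  constructor
  · rintro ⟨h1, h2⟩
    simp only [SMI.truncate, List.mem_filter, decide_eq_true_eq] at h1 h2
    exact ⟨⟨(List.take_sublist _ _).mem h1, h2.1⟩, h1⟩
  · rintro ⟨⟨h1, h2⟩, h3⟩
    refine ⟨h3, ?_⟩
    simp only [SMI.truncate, List.mem_filter, decide_eq_true_eq]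
    exact ⟨h2, h3⟩

theorem my_trunc_mrank_le_a (I : SMI U W) {a : ℕ} {m : U} {w : W}
    (h : (I.truncate a).Acceptable m w) : I.mrank m w ≤ a := by
  have := my_indexOf_lt_of_mem_take ((my_trunc_acc I).mp h).2
  unfold SMI.mrank; omega

theorem my_trunc_mrank_lt_iff (I : SMI U W) {a : ℕ} {m : U} {w w' : W}
    (hw : w ∈ (I.mpref m).take a) (hw' : w' ∈ (I.mpref m).take a) :
    (I.truncate a).mrank m w < (I.truncate a).mrank m w' ↔
      I.mrank m w < I.mrank m w' := by
  unfold SMI.mrank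
  have := my_sublist_indexOf_lt_iff ((I.mpref m).take_sublist a)
    (I.mpref_nodup m) hw hw'
  simp only [SMI.truncate] at *
  omega

theorem my_trunc_wrank_lt_iff (I : SMI U W) {a : ℕ} {w : W} {m m' : U}
    (hm : m ∈ (I.truncate a).wpref w) (hm' : m' ∈ (I.truncate a).wpref w) :
    (I.truncate a).wrank w m < (I.truncate a).wrank w m' ↔
      I.wrank w m < I.wrank w m' := by
  unfold SMI.wrank
  have := my_sublist_indexOf_lt_iff ((I.wpref w).filter_sublist
    (p := fun m => decide (w ∈ (I.mpref m).take a))) (I.wpref_nodup w) hm hm'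
  simp only [SMI.truncate] at *
  omega

theorem my_trunc_wrank_le_iff (I : SMI U W) {a : ℕ} {w : W} {m m' : U}
    (hm : m ∈ (I.truncate a).wpref w) (hm' : m' ∈ (I.truncate a).wpref w) :
    (I.truncate a).wrank w m ≤ (I.truncate a).wrank w m' ↔
      I.wrank w m ≤ I.wrank w m' := by
  have h1 := my_trunc_wrank_lt_iff I hm' hm
  omega

theorem my_mrank_le_dU [Fintype U] [Fintype W] (I : SMI U W) {M : Set (U × W)} {p : U × W} (hp : p ∈ M) :
    I.mrank p.1 p.2 ≤ I.dU M := by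
  have hs : {r : ℕ | ∃ q ∈ M, r = I.mrank q.1 q.2} =
      (fun q : U × W => I.mrank q.1 q.2) '' M := by
    ext r; simp [eq_comm, Set.mem_image]
  refine le_csSup ?_ ⟨p, hp, rfl⟩
  rw [hs]
  exact (M.toFinite.image _).bddAbove

theorem my_wrank_le_dW [Fintype U] [Fintype W] (I : SMI U W) {M : Set (U × W)} {p : U × W} (hp : p ∈ M) :
    I.wrank p.2 p.1 ≤ I.dW M := by
  have hs : {r : ℕ | ∃ q ∈ M, r = I.wrank q.2 q.1} =
      (fun q : U × W => I.wrank q.2 q.1) '' M := by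
    ext r; simp [eq_comm, Set.mem_image]
  refine le_csSup ?_ ⟨p, hp, rfl⟩
  rw [hs]
  exact (M.toFinite.image _).bddAbove

theorem my_dU_le (I : SMI U W) {M : Set (U × W)} {c : ℕ}
    (h : ∀ p ∈ M, I.mrank p.1 p.2 ≤ c) : I.dU M ≤ c := by
  by_cases hne : {r : ℕ | ∃ p ∈ M, r = I.mrank p.1 p.2}.Nonempty
  · exact csSup_le hne (by rintro r ⟨p, hp, rfl⟩; exact h p hp)
  · rw [Set.not_nonempty_iff_eq_empty] at hne
    unfold SMI.dU
    rw [hne, csSup_empty]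
    exact Nat.zero_le c

theorem my_dW_le (I : SMI U W) {M : Set (U × W)} {c : ℕ}
    (h : ∀ p ∈ M, I.wrank p.2 p.1 ≤ c) : I.dW M ≤ c := by
  by_cases hne : {r : ℕ | ∃ p ∈ M, r = I.wrank p.2 p.1}.Nonempty
  · exact csSup_le hne (by rintro r ⟨p, hp, rfl⟩; exact h p hp)
  · rw [Set.not_nonempty_iff_eq_empty] at hne
    unfold SMI.dW
    rw [hne, csSup_empty]
    exact Nat.zero_le c

end SMILemmas

section Transfer
set_option linter.unusedSectionVars false
open SMI
variable {U W : Type} [DecidableEq U] [DecidableEq W]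

theorem my_stable_trunc (I : SMI U W) {a : ℕ} {M : Set (U × W)}
    (hs : I.IsStable M) (hr : ∀ p ∈ M, I.mrank p.1 p.2 ≤ a) :
    (I.truncate a).IsStable M := by
  obtain ⟨⟨hacc, hu1, hu2⟩, hnb⟩ := hs
  have haccT : ∀ p ∈ M, (I.truncate a).Acceptable p.1 p.2 := by
    intro p hp
    refine (my_trunc_acc I).mpr ⟨hacc p hp, ?_⟩
    refine my_mem_take_of_indexOf_lt (hacc p hp).1 ?_
    have := hr p hp; unfold SMI.mrank at this; omega
  refine ⟨⟨haccT, hu1, hu2⟩, ?_⟩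
  rintro m w ⟨hacc', hm, hw⟩
  refine hnb m w ⟨((my_trunc_acc I).mp hacc').1, ?_, ?_⟩
  · rcases hm with h | ⟨w', hw', hlt⟩
    · exact Or.inl h
    · refine Or.inr ⟨w', hw', ?_⟩
      rw [my_trunc_mrank_lt_iff I ((my_trunc_acc I).mp hacc').2
        ((my_trunc_acc I).mp (haccT _ hw')).2] at hlt
      exact hlt
  · rcases hw with h | ⟨m', hm', hlt⟩
    · exact Or.inl h
    · refine Or.inr ⟨m', hm', ?_⟩
      rw [my_trunc_wrank_lt_iff I hacc'.2 (haccT _ hm').2] at hlt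
      exact hlt

theorem my_stable_untrunc (I : SMI U W) {a : ℕ} {M' : Set (U × W)}
    (hs : (I.truncate a).IsStable M') (hm : ∀ m, MMatched M' m) :
    I.IsStable M' := by
  obtain ⟨⟨haccT, hu1, hu2⟩, hnb⟩ := hs
  have hacc : ∀ p ∈ M', I.Acceptable p.1 p.2 :=
    fun p hp => ((my_trunc_acc I).mp (haccT p hp)).1
  refine ⟨⟨hacc, hu1, hu2⟩, ?_⟩
  rintro m w ⟨haccI, hmm, hww⟩
  rcases hmm with h | ⟨w', hw', hlt⟩
  · exact h (hm m)
  have hw'acc := haccT _ hw'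
  have hle : I.mrank m w' ≤ a := my_trunc_mrank_le_a I hw'acc
  have hwtake : w ∈ (I.mpref m).take a := by
    refine my_mem_take_of_indexOf_lt haccI.1 ?_
    unfold SMI.mrank at hlt hle; omega
  have haccT' : (I.truncate a).Acceptable m w := (my_trunc_acc I).mpr ⟨haccI, hwtake⟩
  refine hnb m w ⟨haccT', ?_, ?_⟩
  · exact Or.inr ⟨w', hw',
      (my_trunc_mrank_lt_iff I hwtake ((my_trunc_acc I).mp hw'acc).2).mpr hlt⟩
  · rcases hww with h | ⟨m', hm', hlt'⟩
    · exact Or.inl h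
    · exact Or.inr ⟨m', hm',
        (my_trunc_wrank_lt_iff I haccT'.2 (haccT _ hm').2).mpr hlt'⟩

end Transfer

section Chain
set_option linter.unusedSectionVars false
open SMI
variable {U W : Type} [DecidableEq U] [DecidableEq W]

theorem my_mmatched_stable [Finite U] (J : SMI U W) {M M' : Set (U × W)}
    (hM : J.IsStable M) (hM' : J.IsStable M') {m : U}
    (hmm : MMatched M m) : MMatched M' m := by
  by_contra hun
  obtain ⟨w0, hw0⟩ := hmm
  -- one step of the alternating-path argument
  have step : ∀ mi wi, (mi, wi) ∈ M →
      (¬ MMatched M' mi ∨ ∃ w', (mi, w') ∈ M' ∧ J.mrank mi wi < J.mrank mi w') →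
      ∃ mi' wi', (mi', wi) ∈ M' ∧ (mi', wi') ∈ M ∧
        J.mrank mi' wi' < J.mrank mi' wi := by
    intro mi wi hMi hside
    have hnb := hM'.2 mi wi
    have hacc := hM.1.1 _ hMi
    by_cases hwm : WMatched M' wi
    case neg => exact absurd ⟨hacc, hside, Or.inl hwm⟩ hnb
    obtain ⟨mi', hmi'⟩ := hwm
    have h1 : ¬ (J.wrank wi mi < J.wrank wi mi') :=
      fun hlt => hnb ⟨hacc, hside, Or.inr ⟨mi', hmi', hlt⟩⟩
    have hne : mi' ≠ mi := by
      rintro rfl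
      rcases hside with h | ⟨w', hw', hlt⟩
      · exact h ⟨wi, hmi'⟩
      · have := hM'.1.2.1 _ hmi' _ hw' rfl
        have : wi = w' := congrArg Prod.snd this
        subst this; omega
    have hlt' : J.wrank wi mi' < J.wrank wi mi := by
      have hmem' : mi' ∈ J.wpref wi := (hM'.1.1 _ hmi').2
      have hle : J.wrank wi mi' ≤ J.wrank wi mi := Nat.le_of_not_lt h1
      rcases Nat.lt_or_ge (J.wrank wi mi') (J.wrank wi mi) with h | h
      · exact h
      · exact absurd (my_wrank_inj J hmem' hacc.2 (Nat.le_antisymm hle h)) hne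
    have hnb2 := hM.2 mi' wi
    have hacc2 := hM'.1.1 _ hmi'
    by_cases hmm2 : MMatched M mi'
    case neg => exact absurd ⟨hacc2, Or.inl hmm2, Or.inr ⟨mi, hMi, hlt'⟩⟩ hnb2
    obtain ⟨wi', hwi'⟩ := hmm2
    have h2 : ¬ (J.mrank mi' wi < J.mrank mi' wi') :=
      fun hlt => hnb2 ⟨hacc2, Or.inr ⟨wi', hwi', hlt⟩, Or.inr ⟨mi, hMi, hlt'⟩⟩
    have hne2 : wi' ≠ wi := by
      rintro rfl
      exact hne (congrArg Prod.fst (hM.1.2.2 _ hwi' _ hMi rfl))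
    have hlt2 : J.mrank mi' wi' < J.mrank mi' wi := by
      have hmem2 : wi' ∈ J.mpref mi' := (hM.1.1 _ hwi').1
      rcases Nat.lt_or_ge (J.mrank mi' wi') (J.mrank mi' wi) with h | h
      · exact h
      · exact absurd (my_mrank_inj J hmem2 hacc2.1
          (Nat.le_antisymm (Nat.le_of_not_lt h2) h)) hne2
    exact ⟨mi', wi', hmi', hwi', hlt2⟩
  -- the chain type: ((man, his M-partner), the woman whose M'-partner he is)
  set C := {q : (U × W) × W // (q.1.1, q.2) ∈ M' ∧ q.1 ∈ M ∧
    J.mrank q.1.1 q.1.2 < J.mrank q.1.1 q.2} with hC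
  obtain ⟨m1, w1, hb1, hb2, hb3⟩ := step m w0 hw0 (Or.inl hun)
  have hstep : ∀ c : C, ∃ c' : C, c'.1.2 = c.1.1.2 := by
    rintro ⟨⟨⟨mi, wi⟩, wp⟩, h1, h2, h3⟩
    obtain ⟨mi', wi', hs1, hs2, hs3⟩ := step mi wi h2 (Or.inr ⟨wp, h1, h3⟩)
    exact ⟨⟨((mi', wi'), wi), hs1, hs2, hs3⟩, rfl⟩
  obtain ⟨f, hf0, hfs⟩ : ∃ f : ℕ → C, (f 0).1.2 = w0 ∧
      ∀ n, f (n + 1) = (hstep (f n)).choose :=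
    ⟨fun n => Nat.rec ⟨((m1, w1), w0), hb1, hb2, hb3⟩
      (fun _ c => (hstep c).choose) n, rfl, fun _ => rfl⟩
  have hlink : ∀ n, (f (n + 1)).1.2 = (f n).1.1.2 := by
    intro n; rw [hfs n]; exact (hstep (f n)).choose_spec
  have hinM' : ∀ n, ((f n).1.1.1, (f n).1.2) ∈ M' := fun n => (f n).2.1
  have hinM : ∀ n, (f n).1.1 ∈ M := fun n => (f n).2.2.1
  -- the men along the chain are pairwise distinct
  have key : ∀ n k, (f n).1.1.1 = (f k).1.1.1 → (f n).1.2 = (f k).1.2 := by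
    intro n k hk
    have e1 := hinM' n
    rw [hk] at e1
    have e := hM'.1.2.1 _ e1 _ (hinM' k) rfl
    simp only [Prod.mk.injEq, true_and] at e
    exact e
  have hinj : ∀ n k, (f n).1.1.1 = (f k).1.1.1 → n = k := by
    intro n
    induction n with
    | zero =>
      intro k hk
      cases k with
      | zero => rfl
      | succ k =>
        exfalso
        have hw : (f 0).1.2 = (f (k + 1)).1.2 := key 0 (k + 1) hk
        rw [hf0, hlink k] at hw
        -- w0 = (f k).1.1.2
        have e : (m, w0) = (f k).1.1 := hM.1.2.2 _ hw0 _ (hinM k) (by rw [← hw])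
        have hm' : m = (f k).1.1.1 := congrArg Prod.fst e
        exact hun ⟨(f k).1.2, by rw [hm']; exact hinM' k⟩
    | succ n ih =>
      intro k hk
      cases k with
      | zero =>
        exfalso
        have hw : (f (n + 1)).1.2 = (f 0).1.2 := key (n + 1) 0 hk
        rw [hf0, hlink n] at hw
        have e : (m, w0) = (f n).1.1 := hM.1.2.2 _ hw0 _ (hinM n) (by rw [hw])
        have hm' : m = (f n).1.1.1 := congrArg Prod.fst e
        exact hun ⟨(f n).1.2, by rw [hm']; exact hinM' n⟩
      | succ k =>
        have hw : (f (n + 1)).1.2 = (f (k + 1)).1.2 := key (n + 1) (k + 1) hk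
        rw [hlink n, hlink k] at hw
        have hmen : (f n).1.1 = (f k).1.1 :=
          hM.1.2.2 _ (hinM n) _ (hinM k) hw
        exact congrArg Nat.succ (ih k (congrArg (fun p : U × W => p.1) hmen))
  obtain ⟨n, k, hnk, he⟩ :=
    Finite.exists_ne_map_eq_of_infinite (fun n : ℕ => (f n).1.1.1)
  exact hnk (hinj n k he)

theorem my_wmatched_stable [Finite W] (J : SMI U W) {M M' : Set (U × W)}
    (hM : J.IsStable M) (hM' : J.IsStable M') {w : W}
    (hmm : WMatched M w) : WMatched M' w := by
  by_contra hun
  obtain ⟨m0, hm0⟩ := hmm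
  have step : ∀ wi mi, (mi, wi) ∈ M →
      (¬ WMatched M' wi ∨ ∃ m', (m', wi) ∈ M' ∧ J.wrank wi mi < J.wrank wi m') →
      ∃ wi' mi', (mi, wi') ∈ M' ∧ (mi', wi') ∈ M ∧
        J.wrank wi' mi' < J.wrank wi' mi := by
    intro wi mi hMi hside
    have hnb := hM'.2 mi wi
    have hacc := hM.1.1 _ hMi
    by_cases hwm : MMatched M' mi
    case neg => exact absurd ⟨hacc, Or.inl hwm, hside⟩ hnb
    obtain ⟨wi', hwi'⟩ := hwm
    have h1 : ¬ (J.mrank mi wi < J.mrank mi wi') :=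
      fun hlt => hnb ⟨hacc, Or.inr ⟨wi', hwi', hlt⟩, hside⟩
    have hne : wi' ≠ wi := by
      rintro rfl
      rcases hside with h | ⟨m', hm', hlt⟩
      · exact h ⟨mi, hwi'⟩
      · have e := hM'.1.2.2 _ hwi' _ hm' rfl
        have : mi = m' := congrArg Prod.fst e
        subst this; omega
    have hlt' : J.mrank mi wi' < J.mrank mi wi := by
      have hmem' : wi' ∈ J.mpref mi := (hM'.1.1 _ hwi').1
      have hle : J.mrank mi wi' ≤ J.mrank mi wi := Nat.le_of_not_lt h1
      rcases Nat.lt_or_ge (J.mrank mi wi') (J.mrank mi wi) with h | h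
      · exact h
      · exact absurd (my_mrank_inj J hmem' hacc.1 (Nat.le_antisymm hle h)) hne
    have hnb2 := hM.2 mi wi'
    have hacc2 := hM'.1.1 _ hwi'
    by_cases hmm2 : WMatched M wi'
    case neg => exact absurd ⟨hacc2, Or.inr ⟨wi, hMi, hlt'⟩, Or.inl hmm2⟩ hnb2
    obtain ⟨mi', hmi'⟩ := hmm2
    have h2 : ¬ (J.wrank wi' mi < J.wrank wi' mi') :=
      fun hlt => hnb2 ⟨hacc2, Or.inr ⟨wi, hMi, hlt'⟩, Or.inr ⟨mi', hmi', hlt⟩⟩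
    have hne2 : mi' ≠ mi := by
      rintro rfl
      exact hne (congrArg Prod.snd (hM.1.2.1 _ hmi' _ hMi rfl))
    have hlt2 : J.wrank wi' mi' < J.wrank wi' mi := by
      have hmem2 : mi' ∈ J.wpref wi' := (hM.1.1 _ hmi').2
      rcases Nat.lt_or_ge (J.wrank wi' mi') (J.wrank wi' mi) with h | h
      · exact h
      · exact absurd (my_wrank_inj J hmem2 hacc2.2
          (Nat.le_antisymm (Nat.le_of_not_lt h2) h)) hne2
    exact ⟨wi', mi', hwi', hmi', hlt2⟩
  -- chain type: ((his M-partner, woman), the man whose M'-partner she is)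
  set C := {q : (U × W) × U // (q.2, q.1.2) ∈ M' ∧ q.1 ∈ M ∧
    J.wrank q.1.2 q.1.1 < J.wrank q.1.2 q.2} with hC
  obtain ⟨w1, m1, hb1, hb2, hb3⟩ := step w m0 hm0 (Or.inl hun)
  have hstep : ∀ c : C, ∃ c' : C, c'.1.2 = c.1.1.1 := by
    rintro ⟨⟨⟨mi, wi⟩, mp⟩, h1, h2, h3⟩
    obtain ⟨wi', mi', hs1, hs2, hs3⟩ := step wi mi h2 (Or.inr ⟨mp, h1, h3⟩)
    exact ⟨⟨((mi', wi'), mi), hs1, hs2, hs3⟩, rfl⟩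
  obtain ⟨f, hf0, hfs⟩ : ∃ f : ℕ → C, (f 0).1.2 = m0 ∧
      ∀ n, f (n + 1) = (hstep (f n)).choose :=
    ⟨fun n => Nat.rec ⟨((m1, w1), m0), hb1, hb2, hb3⟩
      (fun _ c => (hstep c).choose) n, rfl, fun _ => rfl⟩
  have hlink : ∀ n, (f (n + 1)).1.2 = (f n).1.1.1 := by
    intro n; rw [hfs n]; exact (hstep (f n)).choose_spec
  have hinM' : ∀ n, ((f n).1.2, (f n).1.1.2) ∈ M' := fun n => (f n).2.1
  have hinM : ∀ n, (f n).1.1 ∈ M := fun n => (f n).2.2.1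
  have key : ∀ n k, (f n).1.1.2 = (f k).1.1.2 → (f n).1.2 = (f k).1.2 := by
    intro n k hk
    have e1 := hinM' n
    rw [hk] at e1
    have e := hM'.1.2.2 _ e1 _ (hinM' k) rfl
    simp only [Prod.mk.injEq, and_true] at e
    exact e
  have hinj : ∀ n k, (f n).1.1.2 = (f k).1.1.2 → n = k := by
    intro n
    induction n with
    | zero =>
      intro k hk
      cases k with
      | zero => rfl
      | succ k =>
        exfalso
        have hw : (f 0).1.2 = (f (k + 1)).1.2 := key 0 (k + 1) hk
        rw [hf0, hlink k] at hw
        have e : (m0, w) = (f k).1.1 := hM.1.2.1 _ hm0 _ (hinM k) (by rw [← hw])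
        have hw' : w = (f k).1.1.2 := congrArg Prod.snd e
        exact hun ⟨(f k).1.2, by rw [hw']; exact hinM' k⟩
    | succ n ih =>
      intro k hk
      cases k with
      | zero =>
        exfalso
        have hw : (f (n + 1)).1.2 = (f 0).1.2 := key (n + 1) 0 hk
        rw [hf0, hlink n] at hw
        have e : (m0, w) = (f n).1.1 := hM.1.2.1 _ hm0 _ (hinM n) (by rw [hw])
        have hw' : w = (f n).1.1.2 := congrArg Prod.snd e
        exact hun ⟨(f n).1.2, by rw [hw']; exact hinM' n⟩
      | succ k =>
        have hw : (f (n + 1)).1.2 = (f (k + 1)).1.2 := key (n + 1) (k + 1) hk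
        rw [hlink n, hlink k] at hw
        have hwomen : (f n).1.1 = (f k).1.1 :=
          hM.1.2.1 _ (hinM n) _ (hinM k) hw
        exact congrArg Nat.succ (ih k (congrArg (fun p : U × W => p.2) hwomen))
  obtain ⟨n, k, hnk, he⟩ :=
    Finite.exists_ne_map_eq_of_infinite (fun n : ℕ => (f n).1.1.2)
  exact hnk (hinj n k he)

end Chain

section Join
set_option linter.unusedSectionVars false
open SMI
variable {U W : Type} [DecidableEq U] [DecidableEq W] [Fintype U] [Fintype W]

theorem my_join (J : SMI U W) {M1 M2 : Set (U × W)}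
    (h1 : J.IsStable M1) (h2 : J.IsStable M2)
    (hP1 : Perfect M1) (hP2 : Perfect M2) :
    ∃ N : Set (U × W), J.IsStable N ∧ Perfect N ∧
      (∀ p ∈ N, ∀ q ∈ M1, q.2 = p.2 → J.wrank p.2 p.1 ≤ J.wrank q.2 q.1) ∧
      (∀ p ∈ N, ∀ q ∈ M2, q.2 = p.2 → J.wrank p.2 p.1 ≤ J.wrank q.2 q.1) := by
  classical
  set N : Set (U × W) := {p | (p ∈ M1 ∧ ∀ q ∈ M2, q.2 = p.2 →
      J.wrank p.2 p.1 ≤ J.wrank q.2 q.1) ∨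
    (p ∈ M2 ∧ ∀ q ∈ M1, q.2 = p.2 →
      J.wrank p.2 p.1 < J.wrank q.2 q.1)} with hN
  have hmem : ∀ p, p ∈ N ↔ (p ∈ M1 ∧ ∀ q ∈ M2, q.2 = p.2 →
      J.wrank p.2 p.1 ≤ J.wrank q.2 q.1) ∨
    (p ∈ M2 ∧ ∀ q ∈ M1, q.2 = p.2 →
      J.wrank p.2 p.1 < J.wrank q.2 q.1) := fun p => Iff.rfl
  have hacc : ∀ p ∈ N, J.Acceptable p.1 p.2 := by
    intro p hp
    rcases (hmem p).mp hp with ⟨h, _⟩ | ⟨h, _⟩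
    · exact h1.1.1 _ h
    · exact h2.1.1 _ h
  -- each woman in N does at least as well as in M1 and in M2
  have hcmp1 : ∀ p ∈ N, ∀ q ∈ M1, q.2 = p.2 →
      J.wrank p.2 p.1 ≤ J.wrank q.2 q.1 := by
    intro p hp q hq hqp
    rcases (hmem p).mp hp with ⟨hpm, _⟩ | ⟨_, hlt⟩
    · have : q = p := h1.1.2.2 _ hq _ hpm hqp
      rw [this]
    · exact le_of_lt (hlt q hq hqp)
  have hcmp2 : ∀ p ∈ N, ∀ q ∈ M2, q.2 = p.2 →
      J.wrank p.2 p.1 ≤ J.wrank q.2 q.1 := by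
    intro p hp q hq hqp
    rcases (hmem p).mp hp with ⟨_, hle⟩ | ⟨hpm, _⟩
    · exact hle q hq hqp
    · have : q = p := h2.1.2.2 _ hq _ hpm hqp
      rw [this]
  -- woman-uniqueness
  have hwu : ∀ p ∈ N, ∀ q ∈ N, p.2 = q.2 → p = q := by
    rintro ⟨pm, pw⟩ hp ⟨qm, qw⟩ hq h
    simp only at h
    subst h
    rcases (hmem _).mp hp with ⟨hpm, hple⟩ | ⟨hpm, hplt⟩ <;>
      rcases (hmem _).mp hq with ⟨hqm, hqle⟩ | ⟨hqm, hqlt⟩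
    · exact h1.1.2.2 _ hpm _ hqm rfl
    · have e1 := hple _ hqm rfl
      have e2 := hqlt _ hpm rfl
      simp only at e1 e2
      omega
    · have e1 := hqle _ hpm rfl
      have e2 := hplt _ hqm rfl
      simp only at e1 e2
      omega
    · exact h2.1.2.2 _ hpm _ hqm rfl
  -- man-uniqueness
  have hmu : ∀ p ∈ N, ∀ q ∈ N, p.1 = q.1 → p = q := by
    rintro ⟨pm, pw⟩ hp ⟨qm, qw⟩ hq h
    simp only at h
    subst h
    by_cases hww : pw = qw
    · rw [hww]
    exfalso
    have haccp := hacc _ hp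
    have haccq := hacc _ hq
    simp only at haccp haccq
    have hrne : J.mrank pm pw ≠ J.mrank pm qw :=
      fun he => hww (my_mrank_inj J haccp.1 haccq.1 he)
    rcases (hmem _).mp hp with ⟨hpm1, hple⟩ | ⟨hpm2, hplt⟩ <;>
      rcases (hmem _).mp hq with ⟨hqm1, hqle⟩ | ⟨hqm2, hqlt⟩
    · exact hww (congrArg Prod.snd (h1.1.2.1 _ hpm1 _ hqm1 rfl))
    · -- p from M1, q from M2
      rcases Nat.lt_or_ge (J.mrank pm qw) (J.mrank pm pw) with hlt | hge
      · -- (pm, qw) blocks M1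
        obtain ⟨mq, hmq⟩ := hP1.2 qw
        exact h1.2 pm qw ⟨h2.1.1 _ hqm2, Or.inr ⟨pw, hpm1, hlt⟩,
          Or.inr ⟨mq, hmq, hqlt _ hmq rfl⟩⟩
      · -- (pm, pw) blocks M2
        have hlt : J.mrank pm pw < J.mrank pm qw := by omega
        obtain ⟨m2', hm2'⟩ := hP2.2 pw
        have hle := hple _ hm2' rfl
        simp only at hle
        have hne : pm ≠ m2' := by
          rintro rfl
          exact hww (congrArg Prod.snd (h2.1.2.1 _ hm2' _ hqm2 rfl))
        have hstrict : J.wrank pw pm < J.wrank pw m2' := by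
          rcases Nat.lt_or_ge (J.wrank pw pm) (J.wrank pw m2') with h | h
          · exact h
          · exact absurd (my_wrank_inj J haccp.2 (h2.1.1 _ hm2').2
              (Nat.le_antisymm hle h)) hne
        exact h2.2 pm pw ⟨haccp, Or.inr ⟨qw, hqm2, hlt⟩,
          Or.inr ⟨m2', hm2', hstrict⟩⟩
    · -- p from M2, q from M1
      rcases Nat.lt_or_ge (J.mrank pm pw) (J.mrank pm qw) with hlt | hge
      · -- (pm, pw) blocks M1
        obtain ⟨m1', hm1'⟩ := hP1.2 pw
        exact h1.2 pm pw ⟨haccp, Or.inr ⟨qw, hqm1, hlt⟩,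
          Or.inr ⟨m1', hm1', hplt _ hm1' rfl⟩⟩
      · -- (pm, qw) blocks M2
        have hlt : J.mrank pm qw < J.mrank pm pw := by omega
        obtain ⟨m2', hm2'⟩ := hP2.2 qw
        have hle := hqle _ hm2' rfl
        simp only at hle
        have hne : pm ≠ m2' := by
          rintro rfl
          exact hww (congrArg Prod.snd (h2.1.2.1 _ hpm2 _ hm2' rfl))
        have hstrict : J.wrank qw pm < J.wrank qw m2' := by
          rcases Nat.lt_or_ge (J.wrank qw pm) (J.wrank qw m2') with h | h
          · exact h
          · exact absurd (my_wrank_inj J haccq.2 (h2.1.1 _ hm2').2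
              (Nat.le_antisymm hle h)) hne
        exact h2.2 pm qw ⟨haccq, Or.inr ⟨pw, hpm2, hlt⟩,
          Or.inr ⟨m2', hm2', hstrict⟩⟩
    · exact hww (congrArg Prod.snd (h2.1.2.1 _ hpm2 _ hqm2 rfl))
  -- every woman is matched in N
  have hwall : ∀ w, WMatched N w := by
    intro w
    obtain ⟨ma, hma⟩ := hP1.2 w
    obtain ⟨mb, hmb⟩ := hP2.2 w
    by_cases h : J.wrank w ma ≤ J.wrank w mb
    · refine ⟨ma, (hmem _).mpr (Or.inl ⟨hma, ?_⟩)⟩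
      intro q hq hq2
      have : q = (mb, w) := h2.1.2.2 _ hq _ hmb hq2
      rw [this]; exact h
    · refine ⟨mb, (hmem _).mpr (Or.inr ⟨hmb, ?_⟩)⟩
      intro q hq hq2
      have : q = (ma, w) := h1.1.2.2 _ hq _ hma hq2
      rw [this]
      show J.wrank w mb < J.wrank w ma
      omega
  -- cardinalities agree
  have hcard : Fintype.card U = Fintype.card W := by
    have i1 : Function.Injective (fun m : U => (hP1.1 m).choose) := by
      intro m m' he
      have s1 : (m, (hP1.1 m).choose) ∈ M1 := (hP1.1 m).choose_spec
      have s2 : (m', (hP1.1 m').choose) ∈ M1 := (hP1.1 m').choose_spec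
      simp only at he
      rw [he] at s1
      exact congrArg Prod.fst (h1.1.2.2 _ s1 _ s2 rfl)
    have i2 : Function.Injective (fun w : W => (hP1.2 w).choose) := by
      intro w w' he
      have s1 : ((hP1.2 w).choose, w) ∈ M1 := (hP1.2 w).choose_spec
      have s2 : ((hP1.2 w').choose, w') ∈ M1 := (hP1.2 w').choose_spec
      simp only at he
      rw [he] at s1
      exact congrArg Prod.snd (h1.1.2.1 _ s1 _ s2 rfl)
    exact le_antisymm (Fintype.card_le_of_injective _ i1)
      (Fintype.card_le_of_injective _ i2)
  -- every man is matched in N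
  have hman : ∀ m, MMatched N m := by
    intro m
    have lspec : ∀ w : W, ((hwall w).choose, w) ∈ N := fun w => (hwall w).choose_spec
    have linj : Function.Injective (fun w : W => (hwall w).choose) := by
      intro w w' he
      simp only at he
      have s1 := lspec w
      have s2 := lspec w'
      rw [he] at s1
      exact congrArg Prod.snd (hmu _ s1 _ s2 rfl)
    have lbij : Function.Bijective (fun w : W => (hwall w).choose) :=
      (Fintype.bijective_iff_injective_and_card _).mpr ⟨linj, hcard.symm⟩
    obtain ⟨w, hw⟩ := lbij.2 m
    exact ⟨w, hw ▸ lspec w⟩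
  -- stability
  have hstab : ∀ m w, ¬ J.Blocks N m w := by
    rintro m w ⟨haccb, hm, hw⟩
    rcases hm with h | ⟨w', hw', hlt⟩
    · exact h (hman m)
    rcases hw with h | ⟨m0, hm0, hltw⟩
    · exact h (hwall w)
    rcases (hmem _).mp hw' with ⟨hw'M, _⟩ | ⟨hw'M, _⟩
    · obtain ⟨m1w, hm1w⟩ := hP1.2 w
      exact h1.2 m w ⟨haccb, Or.inr ⟨w', hw'M, hlt⟩,
        Or.inr ⟨m1w, hm1w, lt_of_lt_of_le hltw (hcmp1 _ hm0 _ hm1w rfl)⟩⟩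
    · obtain ⟨m2w, hm2w⟩ := hP2.2 w
      exact h2.2 m w ⟨haccb, Or.inr ⟨w', hw'M, hlt⟩,
        Or.inr ⟨m2w, hm2w, lt_of_lt_of_le hltw (hcmp2 _ hm0 _ hm2w rfl)⟩⟩
  exact ⟨N, ⟨⟨hacc, hmu, hwu⟩, hstab⟩, ⟨hman, hwall⟩, hcmp1, hcmp2⟩

end Join


/-- There is a truncation rank `a` between `d_U(M_0)` and `d_U(M_z)` whose
woman-optimal stable matching is a stable matching of `I` minimising the
regret sum over all stable matchings of `I`. -/
theorem stmt_10 {U W : Type} [Fintype U] [Fintype W] [DecidableEq U] [DecidableEq W]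
    (I : SMI U W)
    (hperf : ∀ M : Set (U × W), I.IsStable M → SMI.Perfect M)
    (M0 Mz : Set (U × W))
    (h0 : I.ManOptWomanPess M0) (hz : I.WomanOptManPess Mz) :
    ∃ (a : ℕ) (N : Set (U × W)),
      I.dU M0 ≤ a ∧ a ≤ I.dU Mz ∧
      (I.truncate a).IsStable N ∧ SMI.Perfect N ∧
      (∀ M' : Set (U × W), (I.truncate a).IsStable M' →
        ∀ (w : W) (m m' : U), (m, w) ∈ N → (m', w) ∈ M' →
          (I.truncate a).wrank w m ≤ (I.truncate a).wrank w m') ∧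
      I.IsStable N ∧
      ∀ M : Set (U × W), I.IsStable M → I.dU N + I.dW N ≤ I.dU M + I.dW M := by
  classical
  open SMI in
  obtain ⟨hst0, hopt0⟩ := h0
  obtain ⟨hstz, hoptz⟩ := hz
  -- choose a stable matching of I minimising the regret sum
  have hVne : {v : ℕ | ∃ M : Set (U × W), I.IsStable M ∧
      v = I.dU M + I.dW M}.Nonempty := ⟨_, M0, hst0, rfl⟩
  obtain ⟨Ms, hMs, hMsum⟩ := Nat.sInf_mem hVne
  have hmin : ∀ M, I.IsStable M → I.dU Ms + I.dW Ms ≤ I.dU M + I.dW M := by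
    intro M hM
    rw [← hMsum]
    exact Nat.sInf_le ⟨M, hM, rfl⟩
  set a := I.dU Ms with ha
  set T := I.truncate a with hT
  have hMsP : SMI.Perfect Ms := hperf Ms hMs
  have hb1 : I.dU M0 ≤ a := by
    refine my_dU_le I ?_
    rintro ⟨m, w0⟩ hp
    obtain ⟨w, hw⟩ := hMsP.1 m
    exact le_trans ((hopt0 Ms hMs).1 m w0 w hp hw) (my_mrank_le_dU I hw)
  have hb2 : a ≤ I.dU Mz := by
    refine my_dU_le I ?_
    rintro ⟨m, w⟩ hp
    obtain ⟨wz, hwz⟩ := (hperf Mz hstz).1 m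
    exact le_trans ((hoptz Ms hMs).2 m wz w hwz hp) (my_mrank_le_dU I hwz)
  have hMsT : T.IsStable Ms :=
    my_stable_trunc I hMs (fun p hp => my_mrank_le_dU I hp)
  have hperfT : ∀ M', T.IsStable M' → SMI.Perfect M' := by
    intro M' h'
    exact ⟨fun m => my_mmatched_stable T hMsT h' (hMsP.1 m),
           fun w => my_wmatched_stable T hMsT h' (hMsP.2 w)⟩
  -- the value of the inner infimum for a matching
  have hterm : ∀ (M : Set (U × W)), T.IsMatching M → ∀ m w, (m, w) ∈ M →
      sInf {r | ∃ m', (m', w) ∈ M ∧ r = T.wrank w m'} = T.wrank w m := by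
    intro M hM m w hmw
    have he : {r | ∃ m', (m', w) ∈ M ∧ r = T.wrank w m'} = {T.wrank w m} := by
      ext r
      simp only [Set.mem_setOf_eq, Set.mem_singleton_iff]
      constructor
      · rintro ⟨m', hm', rfl⟩
        exact congrArg (fun u => T.wrank w u)
          (congrArg Prod.fst (hM.2.2 _ hm' _ hmw rfl))
      · rintro rfl; exact ⟨m, hmw, rfl⟩
    rw [he, csInf_singleton]
  -- choose a stable matching of T minimising the total woman-rank
  have hVTne : {v : ℕ | ∃ M : Set (U × W), T.IsStable M ∧
      v = ∑ w : W, sInf {r | ∃ m, (m, w) ∈ M ∧ r = T.wrank w m}}.Nonempty :=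
    ⟨_, Ms, hMsT, rfl⟩
  obtain ⟨N, hNT, hNg⟩ := Nat.sInf_mem hVTne
  have hNP : SMI.Perfect N := hperfT N hNT
  -- N is woman-optimal in T
  have hopt : ∀ M', T.IsStable M' → ∀ (w : W) (m m' : U), (m, w) ∈ N →
      (m', w) ∈ M' → T.wrank w m ≤ T.wrank w m' := by
    intro M' hM' w m m' hmN hm'M
    by_contra hcon
    push_neg at hcon
    obtain ⟨N2, hN2T, hN2P, hc1, hc2⟩ :=
      my_join T hNT hM' hNP (hperfT M' hM')
    have hle : ∀ w'' : W,
        sInf {r | ∃ m'', (m'', w'') ∈ N2 ∧ r = T.wrank w'' m''} ≤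
        sInf {r | ∃ m'', (m'', w'') ∈ N ∧ r = T.wrank w'' m''} := by
      intro w''
      obtain ⟨mN, hmN''⟩ := hNP.2 w''
      obtain ⟨m2, hm2''⟩ := hN2P.2 w''
      rw [hterm N hNT.1 _ _ hmN'', hterm N2 hN2T.1 _ _ hm2'']
      exact hc1 (m2, w'') hm2'' (mN, w'') hmN'' rfl
    have hlt : sInf {r | ∃ m'', (m'', w) ∈ N2 ∧ r = T.wrank w m''} <
        sInf {r | ∃ m'', (m'', w) ∈ N ∧ r = T.wrank w m''} := by
      obtain ⟨m2, hm2''⟩ := hN2P.2 w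
      rw [hterm N hNT.1 _ _ hmN, hterm N2 hN2T.1 _ _ hm2'']
      have h7 : T.wrank w m2 ≤ T.wrank w m' := hc2 (m2, w) hm2'' (m', w) hm'M rfl
      omega
    have hsum : (∑ w'' : W, sInf {r | ∃ m'', (m'', w'') ∈ N2 ∧ r = T.wrank w'' m''}) <
        ∑ w'' : W, sInf {r | ∃ m'', (m'', w'') ∈ N ∧ r = T.wrank w'' m''} :=
      Finset.sum_lt_sum (fun i _ => hle i) ⟨w, Finset.mem_univ w, hlt⟩
    have hle2 : sInf {v : ℕ | ∃ M : Set (U × W), T.IsStable M ∧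
        v = ∑ w : W, sInf {r | ∃ m, (m, w) ∈ M ∧ r = T.wrank w m}} ≤
        ∑ w : W, sInf {r | ∃ m, (m, w) ∈ N2 ∧ r = T.wrank w m} :=
      Nat.sInf_le ⟨N2, hN2T, rfl⟩
    omega
  have hNst : I.IsStable N := my_stable_untrunc I hNT hNP.1
  have hdUN : I.dU N ≤ a :=
    my_dU_le I (fun p hp => my_trunc_mrank_le_a I (hNT.1.1 p hp))
  have hdWN : I.dW N ≤ I.dW Ms := by
    refine my_dW_le I ?_
    rintro ⟨m, w⟩ hp
    obtain ⟨ms', hms'⟩ := hMsP.2 w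
    have h5 := hopt Ms hMsT w m ms' hp hms'
    have h6 : I.wrank w m ≤ I.wrank w ms' :=
      (my_trunc_wrank_le_iff I (hNT.1.1 _ hp).2 (hMsT.1.1 _ hms').2).mp h5
    exact le_trans h6 (my_wrank_le_dW I hms')
  refine ⟨a, N, hb1, hb2, hNT, hNP, hopt, hNst, ?_⟩
  intro M hM
  have : I.dU N + I.dW N ≤ I.dU Ms + I.dW Ms := by
    have := add_le_add hdUN hdWN
    omega
  exact le_trans this (hmin M hM)
end

section
/- Let M and N be stable matchings of an SMI instance I, each matching every man and every woman, such that rank(m, M(m)) ≤ rank(m, N(m)) for every man m. If d_U(M) ≥ d_W(M), then r(N) ≥ r(M); that is, once the men's degree of a stable matching is at least the women's degree, making every man weakly worse off cannot decrease the regret-equality score. -/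
/-- If every man is weakly better off in `M` than in `N` (both stable and
perfect) and `d_U(M) ≥ d_W(M)`, then `r(N) ≥ r(M)`. -/
theorem stmt_11 {U W : Type} [Fintype U] [Fintype W] [DecidableEq U] [DecidableEq W]
    (I : SMI U W)
    (M N : Set (U × W)) (hM : I.IsStable M) (hN : I.IsStable N)
    (hMp : SMI.Perfect M) (hNp : SMI.Perfect N)
    (hle : ∀ (m : U) (w w' : W), (m, w) ∈ M → (m, w') ∈ N → I.mrank m w ≤ I.mrank m w')
    (h : I.dW M ≤ I.dU M) :
    I.rScore M ≤ I.rScore N := by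
  classical
  -- every woman weakly prefers N to M
  have hw : ∀ (w : W) (m m' : U), (m, w) ∈ M → (m', w) ∈ N →
      I.wrank w m' ≤ I.wrank w m := by
    intro w m m' hmM hm'N
    by_contra hlt
    push_neg at hlt
    -- w prefers m to m' = N(w); consider m's N-partner w'
    obtain ⟨w', hw'⟩ := hNp.1 m
    have hacc : I.Acceptable m w := hM.1.1 _ hmM
    have haccN : I.Acceptable m w' := hN.1.1 _ hw'
    have hml : I.mrank m w ≤ I.mrank m w' := hle m w w' hmM hw'
    have hne : w ≠ w' := by
      intro he
      subst he
      have := (hN.1.2.2 _ hw' _ hm'N rfl)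
      have : m = m' := congrArg Prod.fst this
      subst this
      exact absurd rfl (Nat.ne_of_lt hlt)
    have hmlt : I.mrank m w < I.mrank m w' := by
      rcases lt_or_eq_of_le hml with h1 | h1
      · exact h1
      · exfalso
        apply hne
        have := (List.idxOf_inj (y := w') hacc.1).mp ?_
        · exact this
        · unfold SMI.mrank at h1; omega
    exact hN.2 m w ⟨hacc, Or.inr ⟨w', hw', hmlt⟩, Or.inr ⟨m', hm'N, hlt⟩⟩
  -- boundedness of the rank sets
  have bddU : ∀ (P : Set (U × W)),
      BddAbove {r : ℕ | ∃ p ∈ P, r = I.mrank p.1 p.2} := by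
    intro P
    apply Set.Finite.bddAbove
    apply Set.Finite.subset (Set.finite_range (fun p : U × W => I.mrank p.1 p.2))
    rintro r ⟨p, _, rfl⟩; exact ⟨p, rfl⟩
  have bddW : ∀ (P : Set (U × W)),
      BddAbove {r : ℕ | ∃ p ∈ P, r = I.wrank p.2 p.1} := by
    intro P
    apply Set.Finite.bddAbove
    apply Set.Finite.subset (Set.finite_range (fun p : U × W => I.wrank p.2 p.1))
    rintro r ⟨p, _, rfl⟩; exact ⟨p, rfl⟩
  -- dU M ≤ dU N
  have hdU : I.dU M ≤ I.dU N := by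
    unfold SMI.dU
    rcases Set.eq_empty_or_nonempty {r : ℕ | ∃ p ∈ M, r = I.mrank p.1 p.2} with he | hne
    · rw [he]; simp
    · apply csSup_le hne
      rintro r ⟨⟨m, w⟩, hmw, rfl⟩
      obtain ⟨w', hw'⟩ := hNp.1 m
      exact le_trans (hle m w w' hmw hw')
        (le_csSup (bddU N) ⟨(m, w'), hw', rfl⟩)
  -- dW N ≤ dW M
  have hdW : I.dW N ≤ I.dW M := by
    unfold SMI.dW
    rcases Set.eq_empty_or_nonempty {r : ℕ | ∃ p ∈ N, r = I.wrank p.2 p.1} with he | hne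
    · rw [he]; simp
    · apply csSup_le hne
      rintro r ⟨⟨m', w⟩, hm'w, rfl⟩
      obtain ⟨m, hm⟩ := hMp.2 w
      exact le_trans (hw w m m' hm hm'w)
        (le_csSup (bddW M) ⟨(m, w), hm, rfl⟩)
  unfold SMI.rScore
  omega
end
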